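/- arXiv:2408.06091 — 2 statements merged into one kernel-verified Lean document; each statement's English description precedes it below -/
import Mathlib

section
/- Let k ≥ 2 and n = 4k, and let 0 < d_1 < ... < d_{2k} satisfy d_{|i|_n} + d_{|j|_n} ≥ d_{|i+j|_n} for all integers i, j. Define a distance on the 4k points {A_0,...,A_{2k-1}, B_0,...,B_{2k-1}} by d(A_i,A_j) = d(B_i,B_j) = d_{|j-i|_{2k}} and d(A_i,B_j) = d_{k + |j-i|_{2k}}. Then this distance satisfies the triangle inequality on every triple of distinct points. -/
/-- `|i|_m = min over integers l of |i - l·m|`. -/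
noncomputable def circAbs (m : ℕ) (i : ℤ) : ℤ :=
  sInf {a : ℤ | ∃ l : ℤ, a = |i - l * (m : ℤ)|}

lemma circAbs_set_nonempty (m : ℕ) (i : ℤ) :
    {a : ℤ | ∃ l : ℤ, a = |i - l * (m : ℤ)|}.Nonempty :=
  ⟨|i - 0 * m|, 0, rfl⟩

lemma circAbs_set_bdd (m : ℕ) (i : ℤ) :
    BddBelow {a : ℤ | ∃ l : ℤ, a = |i - l * (m : ℤ)|} :=
  ⟨0, fun a ⟨l, hl⟩ => hl ▸ abs_nonneg _⟩

lemma circAbs_le (m : ℕ) (i l : ℤ) : circAbs m i ≤ |i - l * m| :=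
  csInf_le (circAbs_set_bdd m i) ⟨l, rfl⟩

lemma circAbs_nonneg (m : ℕ) (i : ℤ) : 0 ≤ circAbs m i :=
  le_csInf (circAbs_set_nonempty m i) (fun a ⟨l, hl⟩ => hl ▸ abs_nonneg _)

lemma le_circAbs (m : ℕ) (i c : ℤ) (h : ∀ l : ℤ, c ≤ |i - l * m|) : c ≤ circAbs m i :=
  le_csInf (circAbs_set_nonempty m i) (fun a ⟨l, hl⟩ => hl ▸ h l)

lemma circAbs_spec (m : ℕ) (i : ℤ) : ∃ l : ℤ, circAbs m i = |i - l * m| :=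
  Int.csInf_mem (circAbs_set_nonempty m i) (circAbs_set_bdd m i)

lemma circAbs_le_half (m : ℕ) (hm : 0 < m) (i : ℤ) : circAbs (2 * m) i ≤ m := by
  have h2m : (0:ℤ) < 2 * m := by positivity
  set q := (i + m) / (2 * (m:ℤ)) with hq
  set r := (i + m) % (2 * (m:ℤ)) with hr
  have hid : (2 * (m:ℤ)) * q + r = i + m := Int.mul_ediv_add_emod _ _
  have hr0 : 0 ≤ r := Int.emod_nonneg _ (by positivity)
  have hr1 : r < 2 * m := Int.emod_lt_of_pos _ h2m
  have heq : i - q * ((2 * m : ℕ) : ℤ) = r - m := by push_cast; linarith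
  calc circAbs (2 * m) i ≤ |i - q * ((2 * m : ℕ) : ℤ)| := circAbs_le _ _ _
    _ = |r - m| := by rw [heq]
    _ ≤ m := by rw [abs_le]; constructor <;> linarith

lemma circAbs_eq_self (k : ℕ) (t : ℤ) (h0 : 0 ≤ t) (h2 : t ≤ 2 * k) :
    circAbs (4 * k) t = t := by
  apply le_antisymm
  · simpa [abs_of_nonneg h0] using circAbs_le (4 * k) t 0
  · apply le_circAbs
    intro l
    have h4 : ((4 * k : ℕ) : ℤ) = 4 * (k:ℤ) := by push_cast; ring
    rw [h4]
    rcases le_or_gt l 0 with hl | hl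
    · refine le_abs.mpr (Or.inl ?_)
      have : l * (4 * (k:ℤ)) ≤ 0 := mul_nonpos_of_nonpos_of_nonneg hl (by positivity)
      linarith
    · refine le_abs.mpr (Or.inr ?_)
      have : 1 * (4 * (k:ℤ)) ≤ l * (4 * (k:ℤ)) :=
        mul_le_mul_of_nonneg_right (by omega) (by positivity)
      linarith

lemma circAbs_add_le (m : ℕ) (i j : ℤ) :
    circAbs m (i + j) ≤ circAbs m i + circAbs m j := by
  obtain ⟨l1, h1⟩ := circAbs_spec m i
  obtain ⟨l2, h2⟩ := circAbs_spec m j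
  rw [h1, h2]
  calc circAbs m (i + j) ≤ |i + j - (l1 + l2) * m| := circAbs_le _ _ _
    _ ≤ |i - l1 * m| + |j - l2 * m| := by
        have e : i + j - (l1 + l2) * (m:ℤ) = (i - l1 * m) + (j - l2 * m) := by ring
        rw [e]; exact abs_add_le _ _

lemma circAbs_sum_le (k : ℕ) (hk : 0 < k) (i j : ℤ) :
    circAbs (2 * k) i + circAbs (2 * k) j + circAbs (2 * k) (i + j) ≤ 2 * k := by
  obtain ⟨l1, h1⟩ := circAbs_spec (2 * k) i
  obtain ⟨l2, h2⟩ := circAbs_spec (2 * k) j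
  set a := i - l1 * ((2 * k : ℕ) : ℤ) with hadef
  set b := j - l2 * ((2 * k : ℕ) : ℤ) with hbdef
  have hak : |a| ≤ (k:ℤ) := h1 ▸ circAbs_le_half k hk i
  have hbk : |b| ≤ (k:ℤ) := h2 ▸ circAbs_le_half k hk j
  have hs0 : 0 ≤ circAbs (2 * k) (i + j) := circAbs_nonneg _ _
  have hs1 : circAbs (2 * k) (i + j) ≤ |a + b| := by
    have := circAbs_le (2 * k) (i + j) (l1 + l2)
    have e : i + j - (l1 + l2) * ((2 * k : ℕ) : ℤ) = a + b := by rw [hadef, hbdef]; ring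
    rwa [e] at this
  have hs2 : circAbs (2 * k) (i + j) ≤ |a + b - 2 * k| := by
    have := circAbs_le (2 * k) (i + j) (l1 + l2 + 1)
    have e : i + j - (l1 + l2 + 1) * ((2 * k : ℕ) : ℤ) = a + b - 2 * k := by
      rw [hadef, hbdef]; push_cast; ring
    rwa [e] at this
  have hs3 : circAbs (2 * k) (i + j) ≤ |a + b + 2 * k| := by
    have := circAbs_le (2 * k) (i + j) (l1 + l2 - 1)
    have e : i + j - (l1 + l2 - 1) * ((2 * k : ℕ) : ℤ) = a + b + 2 * k := by
      rw [hadef, hbdef]; push_cast; ring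
    rwa [e] at this
  rw [h1, h2]
  rw [abs_le] at hak hbk
  rcases abs_cases a with ⟨e1, s1⟩ | ⟨e1, s1⟩ <;>
  rcases abs_cases b with ⟨e2, s2⟩ | ⟨e2, s2⟩ <;>
  rcases abs_cases (a + b) with ⟨e3, s3⟩ | ⟨e3, s3⟩ <;>
  rcases abs_cases (a + b - 2 * (k:ℤ)) with ⟨e4, s4⟩ | ⟨e4, s4⟩ <;>
  rcases abs_cases (a + b + 2 * (k:ℤ)) with ⟨e5, s5⟩ | ⟨e5, s5⟩ <;>
    rw [e1, e2] <;> rw [e3] at hs1 <;> rw [e4] at hs2 <;> rw [e5] at hs3 <;>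
    push_cast <;> linarith

lemma circAbs_cross_lb (k : ℕ) (ca cb cs : ℕ) (hca : ca ≤ k) (hcb : cb ≤ k) (hcs : cs ≤ k)
    (h1 : cs ≤ ca + cb) (h2 : ca + cb + cs ≤ 2 * k) :
    ((k + cs : ℕ) : ℤ) ≤ circAbs (4 * k) ((ca + (k + cb) : ℕ) : ℤ) := by
  apply le_circAbs
  intro l
  have hca' : (ca:ℤ) ≤ k := by exact_mod_cast hca
  have hcb' : (cb:ℤ) ≤ k := by exact_mod_cast hcb
  have hcs' : (cs:ℤ) ≤ k := by exact_mod_cast hcs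
  have h1' : (cs:ℤ) ≤ ca + cb := by exact_mod_cast h1
  have h2' : (ca:ℤ) + cb + cs ≤ 2 * k := by exact_mod_cast h2
  have hc0 : (0:ℤ) ≤ ca := by positivity
  have hb0 : (0:ℤ) ≤ cb := by positivity
  have e : ((ca + (k + cb) : ℕ) : ℤ) - l * ((4 * k : ℕ) : ℤ)
      = (ca:ℤ) + k + cb - l * (4 * (k:ℤ)) := by push_cast; ring
  rw [e]
  push_cast
  rcases le_or_gt l 0 with hl | hl
  · refine le_abs.mpr (Or.inl ?_)
    have : l * (4 * (k:ℤ)) ≤ 0 := mul_nonpos_of_nonpos_of_nonneg hl (by positivity)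
    linarith
  · rcases eq_or_lt_of_le (show (1:ℤ) ≤ l by omega) with hl1 | hl2
    · refine le_abs.mpr (Or.inr ?_)
      rw [← hl1]
      linarith
    · refine le_abs.mpr (Or.inr ?_)
      have : 2 * (4 * (k:ℤ)) ≤ l * (4 * (k:ℤ)) :=
        mul_le_mul_of_nonneg_right (by omega) (by positivity)
      linarith

section Keys
variable (k : ℕ) (d : ℕ → ℝ) (hd0 : d 0 = 0)
  (hmono : ∀ a b : ℕ, a < b → b ≤ 2 * k → d a < d b)

include hmono in
lemma dmono_weak {a b : ℕ} (hab : a ≤ b) (hb : b ≤ 2 * k) : d a ≤ d b := by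
  rcases eq_or_lt_of_le hab with rfl | h
  · exact le_refl _
  · exact (hmono a b h hb).le

include hd0 hmono in
lemma dnonneg {t : ℕ} (ht : t ≤ 2 * k) : 0 ≤ d t := by
  rcases Nat.eq_zero_or_pos t with rfl | h
  · exact le_of_eq hd0.symm
  · exact (hd0 ▸ hmono 0 t h ht).le

variable (hcirc : ∀ i j : ℤ,
      d (circAbs (4 * k) i).toNat + d (circAbs (4 * k) j).toNat
        ≥ d (circAbs (4 * k) (i + j)).toNat)

include hd0 hmono hcirc in
lemma key1 (ca cb cs : ℕ) (hca : ca ≤ k) (hcb : cb ≤ k) (h1 : cs ≤ ca + cb) :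
    d cs ≤ d ca + d cb := by
  have h := hcirc (ca : ℤ) (cb : ℤ)
  rw [circAbs_eq_self k ca (by positivity) (by exact_mod_cast by omega)] at h
  rw [circAbs_eq_self k cb (by positivity) (by exact_mod_cast by omega)] at h
  rw [show (ca : ℤ) + cb = ((ca + cb : ℕ) : ℤ) by push_cast; ring] at h
  rw [circAbs_eq_self k ((ca + cb : ℕ) : ℤ) (by positivity) (by exact_mod_cast by omega)] at h
  simp only [Int.toNat_natCast] at h
  have : d cs ≤ d (ca + cb) := dmono_weak k d hmono h1 (by omega)
  linarith

include hd0 hmono hcirc in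
lemma key2 (hk : 0 < k) (ca cb cs : ℕ) (hca : ca ≤ k) (hcb : cb ≤ k) (hcs : cs ≤ k)
    (h1 : cs ≤ ca + cb) (h2 : ca + cb + cs ≤ 2 * k) :
    d (k + cs) ≤ d ca + d (k + cb) := by
  have h := hcirc (ca : ℤ) ((k + cb : ℕ) : ℤ)
  rw [circAbs_eq_self k ca (by positivity) (by exact_mod_cast by omega)] at h
  rw [circAbs_eq_self k ((k + cb : ℕ) : ℤ) (by positivity) (by exact_mod_cast by omega)] at h
  rw [show (ca : ℤ) + ((k + cb : ℕ) : ℤ) = ((ca + (k + cb) : ℕ) : ℤ) by push_cast; ring] at h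
  simp only [Int.toNat_natCast] at h
  have hlb := circAbs_cross_lb k ca cb cs hca hcb hcs h1 h2
  have hub : circAbs (4 * k) ((ca + (k + cb) : ℕ) : ℤ) ≤ 2 * k := by
    have := circAbs_le_half (2 * k) (by omega) ((ca + (k + cb) : ℕ) : ℤ)
    rw [show 2 * (2 * k) = 4 * k from by ring] at this
    exact_mod_cast this
  have hnn := circAbs_nonneg (4 * k) ((ca + (k + cb) : ℕ) : ℤ)
  have hab : k + cs ≤ (circAbs (4 * k) ((ca + (k + cb) : ℕ) : ℤ)).toNat := by omega
  have hbb : (circAbs (4 * k) ((ca + (k + cb) : ℕ) : ℤ)).toNat ≤ 2 * k := by omega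
  have hstep : d (k + cs) ≤ d (circAbs (4 * k) ((ca + (k + cb) : ℕ) : ℤ)).toNat :=
    dmono_weak k d hmono hab hbb
  linarith

include hd0 hmono in
lemma key3 (ca cb cs : ℕ) (hca : ca ≤ k) (hcb : cb ≤ k) (hcs : cs ≤ k) :
    d cs ≤ d (k + ca) + d (k + cb) := by
  have h1 : d cs ≤ d (k + ca) := dmono_weak k d hmono (by omega) (by omega)
  have h2 : 0 ≤ d (k + cb) := dnonneg k d hd0 hmono (by omega)
  linarith

end Keys

/-- Mutant construction for `n = 4k`: two `2k`-gons `A`, `B` (encoded as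
`Bool × Fin (2k)`) with `d(A_i,A_j) = d(B_i,B_j) = d_{|j-i|_{2k}}` and
`d(A_i,B_j) = d_{k+|j-i|_{2k}}`.  If `0 < d_1 < ... < d_{2k}` satisfy the circular
triangle inequality `d_{|i|_n} + d_{|j|_n} ≥ d_{|i+j|_n}` (with `d_0 = 0`), then this
distance satisfies the triangle inequality on every triple of distinct points. -/
theorem mutant_4k_triangle (k : ℕ) (hk : 2 ≤ k) (d : ℕ → ℝ)
    (hd0 : d 0 = 0)
    (hmono : ∀ a b : ℕ, a < b → b ≤ 2 * k → d a < d b)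
    (hcirc : ∀ i j : ℤ,
      d (circAbs (4 * k) i).toNat + d (circAbs (4 * k) j).toNat
        ≥ d (circAbs (4 * k) (i + j)).toNat) :
    ∀ x y z : Bool × Fin (2 * k), x ≠ y → y ≠ z → z ≠ x →
      (fun u v : Bool × Fin (2 * k) =>
          if u.1 = v.1 then d (circAbs (2 * k) ((v.2 : ℤ) - (u.2 : ℤ))).toNat
          else d (k + (circAbs (2 * k) ((v.2 : ℤ) - (u.2 : ℤ))).toNat)) x y
        + (fun u v : Bool × Fin (2 * k) =>
          if u.1 = v.1 then d (circAbs (2 * k) ((v.2 : ℤ) - (u.2 : ℤ))).toNat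
          else d (k + (circAbs (2 * k) ((v.2 : ℤ) - (u.2 : ℤ))).toNat)) y z
        ≥ (fun u v : Bool × Fin (2 * k) =>
          if u.1 = v.1 then d (circAbs (2 * k) ((v.2 : ℤ) - (u.2 : ℤ))).toNat
          else d (k + (circAbs (2 * k) ((v.2 : ℤ) - (u.2 : ℤ))).toNat)) x z := by
  
  intro x y z _ _ _
  obtain ⟨p, i⟩ := x
  obtain ⟨q, j⟩ := y
  obtain ⟨r, l⟩ := z
  dsimp only
  have hk0 : 0 < k := by omega
  have hab : ((l : ℤ) - (i : ℤ)) = ((j : ℤ) - (i : ℤ)) + ((l : ℤ) - (j : ℤ)) := by ring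
  rw [hab]
  set a : ℤ := (j : ℤ) - (i : ℤ) with hadef
  set b : ℤ := (l : ℤ) - (j : ℤ) with hbdef
  have hca0 := circAbs_nonneg (2 * k) a
  have hcb0 := circAbs_nonneg (2 * k) b
  have hcs0 := circAbs_nonneg (2 * k) (a + b)
  have hcak := circAbs_le_half k hk0 a
  have hcbk := circAbs_le_half k hk0 b
  have hcsk := circAbs_le_half k hk0 (a + b)
  have hsub := circAbs_add_le (2 * k) a b
  have hsum := circAbs_sum_le k hk0 a b
  set ca : ℕ := (circAbs (2 * k) a).toNat with hcadef
  set cb : ℕ := (circAbs (2 * k) b).toNat with hcbdef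
  set cs : ℕ := (circAbs (2 * k) (a + b)).toNat with hcsdef
  have hca : ca ≤ k := by omega
  have hcb : cb ≤ k := by omega
  have hcs : cs ≤ k := by omega
  have h1 : cs ≤ ca + cb := by omega
  have h2 : ca + cb + cs ≤ 2 * k := by omega
  rcases p <;> rcases q <;> rcases r <;>
    simp only [if_pos rfl, Bool.false_eq_true, Bool.true_eq_false, if_neg, reduceIte,
      ge_iff_le]
  · exact key1 k d hd0 hmono hcirc ca cb cs hca hcb h1
  · exact key2 k d hd0 hmono hcirc hk0 ca cb cs hca hcb hcs h1 h2
  · exact key3 k d hd0 hmono ca cb cs hca hcb hcs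
  · have := key2 k d hd0 hmono hcirc hk0 cb ca cs hcb hca hcs (by omega) (by omega)
    linarith
  · have := key2 k d hd0 hmono hcirc hk0 cb ca cs hcb hca hcs (by omega) (by omega)
    linarith
  · exact key3 k d hd0 hmono ca cb cs hca hcb hcs
  · exact key2 k d hd0 hmono hcirc hk0 ca cb cs hca hcb hcs h1 h2
  · exact key1 k d hd0 hmono hcirc ca cb cs hca hcb h1
end

section
/- Define nine points A_0,A_1,A_2,B_0,B_1,B_2,C_0,C_1,C_2 with distances (subscripts mod 3): within each triple {A_i}, {B_i}, {C_i} all distances equal 1; d(A_i,B_i) = d(B_i,C_i) = d(C_i,A_i) = δ_2; d(A_i,B_{i+1}) = d(B_i,C_{i+1}) = d(C_i,A_{i+1}) = δ_3; d(A_i,B_{i+2}) = d(B_i,C_{i+2}) = d(C_i,A_{i+2}) = δ_4, where δ_j = sin(jπ/9)/sin(π/9). Then this defines a metric space (all triangle inequalities hold), it is quasi-homogeneous of type [1,1,δ_2,δ_2,δ_3,δ_3,δ_4,δ_4], and it is not isometric to the set of vertices of the regular 9-gon with side length 1. -/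
open Real

/-- The distinct vertex distances of the unit regular 9-gon: `δ_j = sin(jπ/9)/sin(π/9)`. -/
noncomputable def nonagonDelta (j : ℕ) : ℝ := Real.sin (j * π / 9) / Real.sin (π / 9)

section aux

lemma mn_hs : 0 < Real.sin (π / 9) :=
  Real.sin_pos_of_pos_of_lt_pi (by positivity) (by linarith [pi_pos])

lemma mn_sinmono {a b : ℝ} (ha : 0 ≤ a) (hab : a < b) (hb : b ≤ π/2) :
    Real.sin a < Real.sin b := by
  apply Real.strictMonoOn_sin (by constructor <;> nlinarith [pi_pos])
    (by constructor <;> nlinarith [pi_pos]) hab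

lemma mn_d0 : nonagonDelta 0 = 0 := by simp [nonagonDelta]

lemma mn_d1 : nonagonDelta 1 = 1 := by
  simp only [nonagonDelta, Nat.cast_one, one_mul]
  exact div_self mn_hs.ne'

lemma mn_d2gt : 1 < nonagonDelta 2 := by
  rw [nonagonDelta, lt_div_iff₀ mn_hs, one_mul]
  push_cast
  apply mn_sinmono (by positivity) (by nlinarith [pi_pos]) (by nlinarith [pi_pos])

lemma mn_d23 : nonagonDelta 2 < nonagonDelta 3 := by
  rw [nonagonDelta, nonagonDelta, div_lt_div_iff_of_pos_right mn_hs]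
  push_cast
  apply mn_sinmono (by positivity) (by nlinarith [pi_pos]) (by nlinarith [pi_pos])

lemma mn_d34 : nonagonDelta 3 < nonagonDelta 4 := by
  rw [nonagonDelta, nonagonDelta, div_lt_div_iff_of_pos_right mn_hs]
  push_cast
  apply mn_sinmono (by positivity) (by nlinarith [pi_pos]) (by nlinarith [pi_pos])

lemma mn_d4eq : nonagonDelta 4 = 1 + nonagonDelta 2 := by
  have key : Real.sin (4 * π / 9) = Real.sin (π/9) + Real.sin (2 * π / 9) := by
    have h := Real.sin_sub_sin (4 * π / 9) (2 * π / 9)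
    have h2 : (4 * π / 9 - 2 * π / 9)/2 = π/9 := by ring
    have h3 : (4 * π / 9 + 2 * π / 9)/2 = π/3 := by ring
    rw [h2, h3, Real.cos_pi_div_three] at h
    linarith
  rw [nonagonDelta, nonagonDelta]
  push_cast
  field_simp [mn_hs.ne']
  rw [show π * 2 / 9 = 2 * π / 9 by ring]
  linarith [key]

/-- The distance function. -/
noncomputable def mutD (x y : Fin 3 × Fin 3) : ℝ :=
  if x.1 = y.1 then (if x.2 = y.2 then 0 else 1)
  else if y.1 - x.1 = (1 : Fin 3) then nonagonDelta (2 + ((y.2 - x.2 : Fin 3) : ℕ))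
  else nonagonDelta (2 + ((x.2 - y.2 : Fin 3) : ℕ))

lemma mn_delta_ge1 {k : ℕ} (hk : k < 3) : 1 ≤ nonagonDelta (2 + k) := by
  interval_cases k
  · exact mn_d2gt.le
  · linarith [mn_d2gt, mn_d23]
  · linarith [mn_d2gt, mn_d23, mn_d34]

lemma mn_delta_ge2 {k : ℕ} (hk : k < 3) : nonagonDelta 2 ≤ nonagonDelta (2 + k) := by
  interval_cases k
  · norm_num
  · linarith [mn_d23]
  · linarith [mn_d23, mn_d34]

lemma mn_delta_le4 {k : ℕ} (hk : k < 3) : nonagonDelta (2 + k) ≤ nonagonDelta 4 := by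
  interval_cases k
  · linarith [mn_d23, mn_d34]
  · linarith [mn_d34]
  · norm_num

lemma mutD_self (x : Fin 3 × Fin 3) : mutD x x = 0 := by simp [mutD]

lemma mutD_symm (x y : Fin 3 × Fin 3) : mutD x y = mutD y x := by
  obtain ⟨a, i⟩ := x
  obtain ⟨b, j⟩ := y
  by_cases hab : a = b
  · subst hab
    by_cases hij : i = j
    · subst hij; rfl
    · simp [mutD, hij, Ne.symm hij]
  · have h3 : (b - a = 1 ∧ ¬ a - b = 1) ∨ (¬ b - a = 1 ∧ a - b = 1) := by
      revert hab; revert a b; decide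
    rcases h3 with ⟨h1, h2⟩ | ⟨h1, h2⟩ <;>
      simp [mutD, hab, Ne.symm hab, h1, h2]

lemma mutD_one_le {x y : Fin 3 × Fin 3} (h : x ≠ y) : 1 ≤ mutD x y := by
  rw [mutD]
  split_ifs with h1 h2
  · exact absurd (Prod.ext h1 h2) h
  · exact le_refl 1
  · exact mn_delta_ge1 (Fin.is_lt _)
  · exact mn_delta_ge1 (Fin.is_lt _)

lemma mutD_nonneg (x y : Fin 3 × Fin 3) : 0 ≤ mutD x y := by
  by_cases h : x = y
  · simp [h, mutD_self]
  · linarith [mutD_one_le h]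

lemma mutD_le4 (x y : Fin 3 × Fin 3) : mutD x y ≤ nonagonDelta 4 := by
  have h4 : (1:ℝ) ≤ nonagonDelta 4 := by linarith [mn_d2gt, mn_d23, mn_d34]
  rw [mutD]
  split_ifs with h1 h2
  · linarith
  · linarith
  · exact mn_delta_le4 (Fin.is_lt _)
  · exact mn_delta_le4 (Fin.is_lt _)

lemma mutD_letter {x y : Fin 3 × Fin 3} (h : x.1 ≠ y.1) : nonagonDelta 2 ≤ mutD x y := by
  rw [mutD]
  split_ifs with h1 h2
  · exact absurd h1 h
  · exact absurd h1 h
  · exact mn_delta_ge2 (Fin.is_lt _)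
  · exact mn_delta_ge2 (Fin.is_lt _)

lemma mutD_same_letter {x y : Fin 3 × Fin 3} (h : x.1 = y.1) : mutD x y ≤ 1 := by
  rw [mutD, if_pos h]
  split_ifs <;> norm_num

lemma mutD_triangle (x y z : Fin 3 × Fin 3) : mutD x z ≤ mutD x y + mutD y z := by
  by_cases hxy : x = y
  · subst hxy; simp [mutD_self]
  by_cases hyz : y = z
  · subst hyz; simp [mutD_self]
  by_cases hxz : x = z
  · subst hxz
    rw [mutD_self]
    exact add_nonneg (mutD_nonneg _ _) (mutD_nonneg _ _)
  by_cases h1 : x.1 = z.1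
  · calc mutD x z ≤ 1 := mutD_same_letter h1
      _ ≤ mutD x y + mutD y z := by
        linarith [mutD_one_le hxy, mutD_nonneg y z]
  · -- x.1 ≠ z.1
    have h4 := mutD_le4 x z
    rw [mn_d4eq] at h4
    by_cases hy1 : y.1 = x.1
    · have hy2 : y.1 ≠ z.1 := fun hc => h1 (hy1 ▸ hc)
      have := mutD_letter hy2
      have h1' : mutD x y = 1 := by
        rw [mutD, if_pos hy1.symm, if_neg]
        exact fun hc => hxy (Prod.ext hy1.symm hc)
      linarith
    · by_cases hy2 : y.1 = z.1
      · have := mutD_letter (fun hc : x.1 = y.1 => hy1 hc.symm)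
        have h1' : mutD y z = 1 := by
          rw [mutD, if_pos hy2, if_neg]
          exact fun hc => hyz (Prod.ext hy2 hc)
        linarith
      · have ha := mutD_letter (fun hc : x.1 = y.1 => hy1 hc.symm)
        have hb := mutD_letter (fun hc : y.1 = z.1 => hy2 hc)
        linarith [mn_d2gt]

lemma circ_facts (i : ℤ) : (∃ l, circAbs 9 i = |i - l * 9|) ∧ ∀ l, circAbs 9 i ≤ |i - l * 9| := by
  have hne : {a : ℤ | ∃ l : ℤ, a = |i - l * ((9:ℕ) : ℤ)|}.Nonempty := ⟨|i|, 0, by simp⟩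
  have hbdd : BddBelow {a : ℤ | ∃ l : ℤ, a = |i - l * ((9:ℕ) : ℤ)|} := by
    refine ⟨0, fun a ha => ?_⟩
    obtain ⟨l, rfl⟩ := ha
    exact abs_nonneg _
  constructor
  · obtain ⟨l, hl⟩ := Int.csInf_mem hne hbdd
    exact ⟨l, by simpa [circAbs] using hl⟩
  · intro l
    have hmem : |i - l * ((9:ℕ):ℤ)| ∈ {a : ℤ | ∃ l : ℤ, a = |i - l * ((9:ℕ) : ℤ)|} := ⟨l, rfl⟩
    simpa [circAbs] using csInf_le hbdd hmem

lemma circ_one {i : ℤ} (h1 : -8 ≤ i) (h2 : i ≤ 8)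
    (h : nonagonDelta (circAbs 9 i).toNat = 1) : ∃ l, i - 9 * l = 1 ∨ i - 9 * l = -1 := by
  obtain ⟨⟨l0, hl0⟩, hle⟩ := circ_facts i
  have b0 := hle 0
  have bp := hle 1
  have bm := hle (-1)
  have e0 : i - 0 * 9 = i := by ring
  have ep : i - 1 * 9 = i - 9 := by ring
  have em : i - (-1) * 9 = i + 9 := by ring
  rw [e0] at b0; rw [ep] at bp; rw [em] at bm
  have hpos : 0 ≤ circAbs 9 i := hl0 ▸ abs_nonneg _
  have hub : circAbs 9 i ≤ 4 := by
    rcases abs_cases i with ⟨ha, _⟩ | ⟨ha, _⟩ <;>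
      rcases abs_cases (i - 9) with ⟨hb, _⟩ | ⟨hb, _⟩ <;>
      rcases abs_cases (i + 9) with ⟨hc, _⟩ | ⟨hc, _⟩ <;> omega
  set c := circAbs 9 i with hc
  interval_cases c
  · norm_num [mn_d0] at h
  · refine ⟨l0, ?_⟩
    rcases abs_cases (i - l0 * 9) with ⟨ha, _⟩ | ⟨ha, _⟩ <;> omega
  · rw [show (Int.toNat 2) = 2 from rfl] at h; linarith [mn_d2gt]
  · rw [show (Int.toNat 3) = 3 from rfl] at h; linarith [mn_d2gt, mn_d23]
  · rw [show (Int.toNat 4) = 4 from rfl] at h; linarith [mn_d2gt, mn_d23, mn_d34]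

end aux

/-- The mutant of the regular nonagon: nine points `A_0,A_1,A_2,B_0,B_1,B_2,C_0,C_1,C_2`
(encoded as pairs `(letter, subscript) : Fin 3 × Fin 3`), with distance 1 inside each
letter triple, `d(A_i,B_i)=d(B_i,C_i)=d(C_i,A_i)=δ_2`, `d(A_i,B_{i+1})=d(B_i,C_{i+1})
=d(C_i,A_{i+1})=δ_3`, `d(A_i,B_{i+2})=d(B_i,C_{i+2})=d(C_i,A_{i+2})=δ_4` (subscripts
mod 3).  This is a metric space, it is quasi-homogeneous of type
`[1,1,δ_2,δ_2,δ_3,δ_3,δ_4,δ_4]`, and it is not isometric to the vertex set of the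
regular 9-gon with unit side length. -/
theorem mutant_nonagon :
    ∃ D : (Fin 3 × Fin 3) → (Fin 3 × Fin 3) → ℝ,
      (∀ x y : Fin 3 × Fin 3, D x y =
        if x.1 = y.1 then (if x.2 = y.2 then 0 else 1)
        else if y.1 - x.1 = (1 : Fin 3) then nonagonDelta (2 + ((y.2 - x.2 : Fin 3) : ℕ))
        else nonagonDelta (2 + ((x.2 - y.2 : Fin 3) : ℕ))) ∧
      -- it is a metric space: symmetry, positivity and all triangle inequalities
      (∀ x y, D x y = D y x) ∧
      (∀ x y, x ≠ y → 0 < D x y) ∧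
      (∀ x y z : Fin 3 × Fin 3, D x z ≤ D x y + D y z) ∧
      -- quasi-homogeneous of type [1,1,δ₂,δ₂,δ₃,δ₃,δ₄,δ₄]
      (∀ x : Fin 3 × Fin 3,
        ((Finset.univ : Finset (Fin 3 × Fin 3)).val.map fun y => D x y)
          = (0 ::ₘ 1 ::ₘ 1 ::ₘ nonagonDelta 2 ::ₘ nonagonDelta 2 ::ₘ nonagonDelta 3 ::ₘ
              nonagonDelta 3 ::ₘ nonagonDelta 4 ::ₘ {nonagonDelta 4})) ∧
      -- not isometric to the vertex set of the regular 9-gon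
      ¬ ∃ e : (Fin 3 × Fin 3) ≃ Fin 9, ∀ x y : Fin 3 × Fin 3,
          D x y = nonagonDelta (circAbs 9 ((e y : ℤ) - (e x : ℤ))).toNat := by
  refine ⟨mutD, fun x y => rfl, mutD_symm, ?_, mutD_triangle, ?_, ?_⟩
  · intro x y h
    linarith [mutD_one_le h]
  · intro x
    have huniv : ((Finset.univ : Finset (Fin 3 × Fin 3)).val) =
        ((0,0) ::ₘ (0,1) ::ₘ (0,2) ::ₘ (1,0) ::ₘ (1,1) ::ₘ (1,2) ::ₘ (2,0) ::ₘ (2,1) ::ₘ {(2,2)}) := by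
      decide
    rw [huniv]
    simp only [Multiset.map_cons, Multiset.map_singleton]
    fin_cases x
    · show ((0:ℝ) ::ₘ 1 ::ₘ 1 ::ₘ nonagonDelta 2 ::ₘ nonagonDelta 3 ::ₘ nonagonDelta 4 ::ₘ
          nonagonDelta 2 ::ₘ nonagonDelta 4 ::ₘ {nonagonDelta 3}) = _
      simp only [← Multiset.singleton_add]; ac_rfl
    · show ((1:ℝ) ::ₘ 0 ::ₘ 1 ::ₘ nonagonDelta 4 ::ₘ nonagonDelta 2 ::ₘ nonagonDelta 3 ::ₘ
          nonagonDelta 3 ::ₘ nonagonDelta 2 ::ₘ {nonagonDelta 4}) = _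
      simp only [← Multiset.singleton_add]; ac_rfl
    · show ((1:ℝ) ::ₘ 1 ::ₘ 0 ::ₘ nonagonDelta 3 ::ₘ nonagonDelta 4 ::ₘ nonagonDelta 2 ::ₘ
          nonagonDelta 4 ::ₘ nonagonDelta 3 ::ₘ {nonagonDelta 2}) = _
      simp only [← Multiset.singleton_add]; ac_rfl
    · show (nonagonDelta 2 ::ₘ nonagonDelta 4 ::ₘ nonagonDelta 3 ::ₘ (0:ℝ) ::ₘ 1 ::ₘ 1 ::ₘ
          nonagonDelta 2 ::ₘ nonagonDelta 3 ::ₘ {nonagonDelta 4}) = _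
      simp only [← Multiset.singleton_add]; ac_rfl
    · show (nonagonDelta 3 ::ₘ nonagonDelta 2 ::ₘ nonagonDelta 4 ::ₘ (1:ℝ) ::ₘ 0 ::ₘ 1 ::ₘ
          nonagonDelta 4 ::ₘ nonagonDelta 2 ::ₘ {nonagonDelta 3}) = _
      simp only [← Multiset.singleton_add]; ac_rfl
    · show (nonagonDelta 4 ::ₘ nonagonDelta 3 ::ₘ nonagonDelta 2 ::ₘ (1:ℝ) ::ₘ 1 ::ₘ 0 ::ₘ
          nonagonDelta 3 ::ₘ nonagonDelta 4 ::ₘ {nonagonDelta 2}) = _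
      simp only [← Multiset.singleton_add]; ac_rfl
    · show (nonagonDelta 2 ::ₘ nonagonDelta 3 ::ₘ nonagonDelta 4 ::ₘ nonagonDelta 2 ::ₘ
          nonagonDelta 4 ::ₘ nonagonDelta 3 ::ₘ (0:ℝ) ::ₘ 1 ::ₘ {1}) = _
      simp only [← Multiset.singleton_add]; ac_rfl
    · show (nonagonDelta 4 ::ₘ nonagonDelta 2 ::ₘ nonagonDelta 3 ::ₘ nonagonDelta 3 ::ₘ
          nonagonDelta 2 ::ₘ nonagonDelta 4 ::ₘ (1:ℝ) ::ₘ 0 ::ₘ {1}) = _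
      simp only [← Multiset.singleton_add]; ac_rfl
    · show (nonagonDelta 3 ::ₘ nonagonDelta 4 ::ₘ nonagonDelta 2 ::ₘ nonagonDelta 4 ::ₘ
          nonagonDelta 3 ::ₘ nonagonDelta 2 ::ₘ (1:ℝ) ::ₘ 1 ::ₘ {0}) = _
      simp only [← Multiset.singleton_add]; ac_rfl
  · rintro ⟨e, he⟩
    have key : ∀ x y : Fin 3 × Fin 3, mutD x y = 1 →
        ∃ l, (e y : ℤ) - (e x : ℤ) - 9 * l = 1 ∨ (e y : ℤ) - (e x : ℤ) - 9 * l = -1 := by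
      intro x y hxy
      have hd := he x y
      rw [hxy] at hd
      have hb1 : (e x).val < 9 := (e x).is_lt
      have hb2 : (e y).val < 9 := (e y).is_lt
      obtain ⟨l, hl⟩ := circ_one (i := (e y : ℤ) - (e x : ℤ)) (by omega) (by omega) hd.symm
      exact ⟨l, by omega⟩
    have h01 : mutD (0,0) (0,1) = 1 := by norm_num [mutD] <;> decide
    have h12 : mutD (0,1) (0,2) = 1 := by norm_num [mutD] <;> decide
    have h02 : mutD (0,0) (0,2) = 1 := by norm_num [mutD] <;> decide
    obtain ⟨l1, hl1⟩ := key (0,0) (0,1) h01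
    obtain ⟨l2, hl2⟩ := key (0,1) (0,2) h12
    obtain ⟨l3, hl3⟩ := key (0,0) (0,2) h02
    omega
end
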